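/- There exists a diagonal approximation Δ: P → P ⊗ P whose components satisfy: Δ_0(x) = x ⊗ x; Δ_1(y_i) = y_i ⊗ a_i x + x ⊗ y_i for all 1 ≤ i ≤ n; Δ_{02}(w) = x ⊗ w; and Δ_{11}(w) = Σ_{i=1}^n [ Σ_{j=1}^{i-1} γ_j y_j ⊗ r_{i-1}(1 + a_i) y_i + r_{i-1} y_i ⊗ r_{i-1} a_i y_i ]. -/

import Mathlib

open scoped TensorProduct

namespace SurfaceNonOr

/-- The single relator `a₁²a₂²⋯aₙ²` of the nonorientable surface group. -/
def rel (n : ℕ) : FreeGroup (Fin n) :=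
  (List.ofFn fun i : Fin n => (FreeGroup.of i) ^ 2).prod

/-- The nonorientable surface group `⟨a₁,…,aₙ ∣ a₁²a₂²⋯aₙ²⟩`. -/
abbrev SurfaceGroup (n : ℕ) := PresentedGroup ({rel n} : Set (FreeGroup (Fin n)))

noncomputable def a {n : ℕ} (i : Fin n) : SurfaceGroup n := PresentedGroup.of i

/-- `r k = a₁²a₂²⋯a_k²`. -/
noncomputable def r {n : ℕ} (k : ℕ) : SurfaceGroup n :=
  ((List.ofFn fun i : Fin n => (a i) ^ 2).take k).prod

/-- The integral group ring `ℤG`. -/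
abbrev A (n : ℕ) := MonoidAlgebra ℤ (SurfaceGroup n)

/-- Inclusion of the group in its group ring. -/
noncomputable def j {n : ℕ} : SurfaceGroup n →* A n := MonoidAlgebra.of ℤ (SurfaceGroup n)

/-- The Fox derivative `∂p/∂aᵢ = r_{i-1}(1 + aᵢ)`. -/
noncomputable def Fa {n : ℕ} (i : Fin n) : A n := j (r i.val) * (1 + j (a i))

abbrev P0 (n : ℕ) := A n
abbrev P1 (n : ℕ) := Fin n → A n
abbrev P2 (n : ℕ) := A n

/-- `d₁ : P₁ → P₀`, `yᵢ ↦ (aᵢ-1)x`. -/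
noncomputable def d1 {n : ℕ} : P1 n →ₗ[A n] P0 n where
  toFun f := ∑ s, f s * (j (a s) - 1)
  map_add' f g := by simp [add_mul, Finset.sum_add_distrib]
  map_smul' r f := by simp [Finset.mul_sum, mul_assoc, smul_eq_mul, mul_add]

/-- `d₂ : P₂ → P₁`, `w ↦ Σᵢ (∂p/∂aᵢ)yᵢ`. -/
noncomputable def d2 {n : ℕ} : P2 n →ₗ[A n] P1 n where
  toFun c := fun s => c * Fa s
  map_add' c c' := by funext s; simp [add_mul]
  map_smul' c c' := by funext s; simp [mul_assoc, smul_eq_mul]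

/-- The augmentation `ε : ℤG → ℤ`. -/
noncomputable def aug {n : ℕ} : A n →ₐ[ℤ] ℤ := MonoidAlgebra.lift ℤ ℤ (SurfaceGroup n) 1

/-- `ε` as a `ℤ`-linear map. -/
noncomputable def augz {n : ℕ} : P0 n →ₗ[ℤ] ℤ := (aug (n := n)).toLinearMap

/-- `d₁` as a `ℤ`-linear map. -/
noncomputable def d1z {n : ℕ} : P1 n →ₗ[ℤ] P0 n := (d1 (n := n)).toAddMonoidHom.toIntLinearMap

/-- `d₂` as a `ℤ`-linear map. -/
noncomputable def d2z {n : ℕ} : P2 n →ₗ[ℤ] P1 n := (d2 (n := n)).toAddMonoidHom.toIntLinearMap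

/-- The action of `g ∈ G` on `P₀ = ℤG` (left multiplication), as a `ℤ`-linear map. -/
noncomputable def L0 {n : ℕ} (g : SurfaceGroup n) : P0 n →ₗ[ℤ] P0 n :=
  LinearMap.mulLeft ℤ (j g)

/-- The action of `g ∈ G` on `P₁ = (ℤG)ⁿ`, as a `ℤ`-linear map. -/
noncomputable def L1 {n : ℕ} (g : SurfaceGroup n) : P1 n →ₗ[ℤ] P1 n :=
  LinearMap.pi fun s => (L0 g).comp (LinearMap.proj s)

/-- `(ε ⊗ ε) : P₀ ⊗ P₀ → ℤ ⊗ ℤ ≅ ℤ`. -/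
noncomputable def augaug {n : ℕ} : P0 n ⊗[ℤ] P0 n →ₗ[ℤ] ℤ :=
  (TensorProduct.lid ℤ ℤ).toLinearMap ∘ₗ TensorProduct.map augz augz

/-- The generator `yᵢ` of `P₁`. -/
noncomputable def Y {n : ℕ} (i : Fin n) : P1 n := Pi.single i 1

/-- The element `Δ₁₁(w) ∈ P₁ ⊗ P₁` for the nonorientable surface group. -/
noncomputable def Delta11 (n : ℕ) : P1 n ⊗[ℤ] P1 n :=
  ∑ i : Fin n,
    ((∑ k ∈ Finset.Iio i, (Fa k • Y k) ⊗ₜ[ℤ] (Fa i • Y i))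
      + (j (r (n := n) i.val) • Y i) ⊗ₜ[ℤ] (j (r (n := n) i.val * a i) • Y i))

variable {n : ℕ}

-- group facts
lemma r_zero : (r 0 : SurfaceGroup n) = 1 := by simp [r]

lemma r_succ (k : Fin n) : (r (k.val + 1) : SurfaceGroup n) = r k.val * (a k) ^ 2 := by
  have h : k.val < (List.ofFn fun i : Fin n => (a i) ^ 2).length := by
    simpa using k.isLt
  rw [r, r, List.prod_take_succ _ _ h]
  congr 1
  simp

lemma r_top : (r n : SurfaceGroup n) = 1 := by
  have : (r n : SurfaceGroup n)
      = (QuotientGroup.mk' (Subgroup.normalClosure ({rel n} : Set (FreeGroup (Fin n))))) (rel n) := by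
    rw [r]
    rw [List.take_of_length_le (by simp)]
    show _ = (QuotientGroup.mk' _) (List.ofFn fun i : Fin n => (FreeGroup.of i) ^ 2).prod
    rw [map_list_prod, List.map_ofFn]
    congr 1
  rw [this]
  exact PresentedGroup.one_of_mem (Set.mem_singleton _)

section Lifted
variable {M : Type} [AddCommGroup M] [Module ℤ M]

noncomputable def lifted (φ : SurfaceGroup n → M) : A n →ₗ[ℤ] M :=
  Finsupp.linearCombination ℤ φ ∘ₗ (MonoidAlgebra.coeffLinearEquiv ℤ).toLinearMap

lemma j_eq (g : SurfaceGroup n) : (j g : A n) = MonoidAlgebra.single g 1 := rfl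

lemma lifted_j (φ : SurfaceGroup n → M) (g : SurfaceGroup n) :
    lifted φ (j g) = φ g := by
  rw [j_eq]
  show (Finsupp.linearCombination ℤ φ) (Finsupp.single g 1) = φ g
  rw [Finsupp.linearCombination_single]
  exact ‹Module ℤ M›.one_smul (φ g)

lemma lifted_one (φ : SurfaceGroup n → M) : lifted φ (1 : A n) = φ 1 := by
  have : (1 : A n) = j 1 := by simp
  rw [this, lifted_j]

lemma lifted_mul (φ : SurfaceGroup n → M) (g : SurfaceGroup n) (ρ : M →ₗ[ℤ] M)
    (hφ : ∀ h, φ (g * h) = ρ (φ h)) (c : A n) :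
    lifted φ (j g * c) = ρ (lifted φ c) := by
  induction c using MonoidAlgebra.induction_linear with
  | zero => simp
  | add x y hx hy => rw [mul_add, map_add, hx, hy, map_add, map_add]
  | single h z =>
      have h1 : j g * (MonoidAlgebra.single h z : A n) = MonoidAlgebra.single (g * h) z := by
        rw [j_eq, MonoidAlgebra.single_mul_single, one_mul]
      show lifted φ (j g * MonoidAlgebra.single h z) = ρ (lifted φ (MonoidAlgebra.single h z))
      rw [h1]
      show (Finsupp.linearCombination ℤ φ) (Finsupp.single (g * h) z)
          = ρ ((Finsupp.linearCombination ℤ φ) (Finsupp.single h z))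
      rw [Finsupp.linearCombination_single, Finsupp.linearCombination_single, hφ, ρ.map_smul]

end Lifted

noncomputable def D0 : P0 n →ₗ[ℤ] P0 n ⊗[ℤ] P0 n :=
  lifted fun g => j g ⊗ₜ[ℤ] j g

noncomputable def phi1 (i : Fin n) (g : SurfaceGroup n) :
    (P0 n ⊗[ℤ] P1 n) × (P1 n ⊗[ℤ] P0 n) :=
  (j g ⊗ₜ[ℤ] (j g • Y i), (j g • Y i) ⊗ₜ[ℤ] j (g * a i))

noncomputable def D1 : P1 n →ₗ[ℤ] (P0 n ⊗[ℤ] P1 n) × (P1 n ⊗[ℤ] P0 n) :=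
  ∑ i : Fin n, (lifted (phi1 i)) ∘ₗ
    (LinearMap.proj (R := ℤ) (φ := fun _ : Fin n => A n) i)

noncomputable def phi2 (g : SurfaceGroup n) :
    (P0 n ⊗[ℤ] P2 n) × (P1 n ⊗[ℤ] P1 n) × (P2 n ⊗[ℤ] P0 n) :=
  (j g ⊗ₜ[ℤ] j g, TensorProduct.map (L1 g) (L1 g) (Delta11 n), j g ⊗ₜ[ℤ] j g)

noncomputable def D2 : P2 n →ₗ[ℤ]
    (P0 n ⊗[ℤ] P2 n) × (P1 n ⊗[ℤ] P1 n) × (P2 n ⊗[ℤ] P0 n) :=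
  lifted (phi2 (n := n))

lemma j_one : (j 1 : A n) = 1 := map_one j

lemma L0_apply (g : SurfaceGroup n) (c : P0 n) : L0 g c = j g * c := rfl

lemma L1_apply (g : SurfaceGroup n) (f : P1 n) (s : Fin n) : L1 g f s = j g * f s := rfl

lemma L1_smul (g : SurfaceGroup n) (c : A n) (f : P1 n) :
    L1 g (c • f) = (j g * c) • f := by
  funext s
  show j g * (c * f s) = (j g * c) * f s
  rw [mul_assoc]

lemma L0_one : L0 (1 : SurfaceGroup n) = LinearMap.id := by
  apply LinearMap.ext; intro c
  show j 1 * c = c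
  rw [j_one, one_mul]

lemma L1_one : L1 (1 : SurfaceGroup n) = LinearMap.id := by
  apply LinearMap.ext; intro f; funext s
  show j 1 * f s = f s
  rw [j_one, one_mul]

lemma L1_mul (g h : SurfaceGroup n) : L1 (g * h) = L1 g ∘ₗ L1 h := by
  apply LinearMap.ext; intro f; funext s
  show j (g * h) * f s = j g * (j h * f s)
  rw [map_mul, mul_assoc]

lemma D0_one : D0 (1 : P0 n) = (1 : P0 n) ⊗ₜ[ℤ] (1 : P0 n) := by
  rw [D0, lifted_one, j_one]

lemma hD0 (g : SurfaceGroup n) (c : P0 n) :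
    D0 (j g * c) = TensorProduct.map (L0 g) (L0 g) (D0 c) := by
  refine lifted_mul _ g _ (fun h => ?_) c
  erw [TensorProduct.map_tmul]
  rw [map_mul]
  rfl

lemma D1_apply (f : P1 n) : D1 f = ∑ i, lifted (phi1 i) (f i) := by
  rw [D1, LinearMap.sum_apply]
  rfl

lemma D1_Y (i : Fin n) : D1 (Y i) = ((1 : P0 n) ⊗ₜ[ℤ] Y i, Y i ⊗ₜ[ℤ] j (a i)) := by
  rw [D1_apply]
  rw [Finset.sum_eq_single i]
  · rw [Y, Pi.single_eq_same, lifted_one, phi1, j_one, one_smul, one_mul]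
    rfl
  · intro k _ hk
    rw [Y, Pi.single_eq_of_ne hk, map_zero]
  · intro h; exact absurd (Finset.mem_univ i) h

noncomputable def rho1 (g : SurfaceGroup n) :
    ((P0 n ⊗[ℤ] P1 n) × (P1 n ⊗[ℤ] P0 n)) →ₗ[ℤ] ((P0 n ⊗[ℤ] P1 n) × (P1 n ⊗[ℤ] P0 n)) :=
  (TensorProduct.map (L0 g) (L1 g)).prodMap (TensorProduct.map (L1 g) (L0 g))

lemma phi1_equi (g : SurfaceGroup n) (i : Fin n) (h : SurfaceGroup n) :
    phi1 i (g * h) = rho1 g (phi1 i h) := by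
  rw [phi1, phi1, rho1]
  apply Prod.ext
  · show j (g * h) ⊗ₜ[ℤ] (j (g * h) • Y i)
      = TensorProduct.map (L0 g) (L1 g) (j h ⊗ₜ[ℤ] (j h • Y i))
    rw [TensorProduct.map_tmul, L0_apply, L1_smul, map_mul]
  · show (j (g * h) • Y i) ⊗ₜ[ℤ] j (g * h * a i)
      = TensorProduct.map (L1 g) (L0 g) ((j h • Y i) ⊗ₜ[ℤ] j (h * a i))
    rw [TensorProduct.map_tmul, L0_apply, L1_smul, ← map_mul, ← map_mul, mul_assoc]

lemma hD1 (g : SurfaceGroup n) (f : P1 n) : D1 (j g • f) = rho1 g (D1 f) := by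
  rw [D1_apply, D1_apply, map_sum]
  refine Finset.sum_congr rfl fun i _ => ?_
  have : (j g • f) i = j g * f i := rfl
  rw [this]
  exact lifted_mul _ g _ (phi1_equi g i) (f i)

noncomputable def rho2 (g : SurfaceGroup n) :
    ((P0 n ⊗[ℤ] P2 n) × (P1 n ⊗[ℤ] P1 n) × (P2 n ⊗[ℤ] P0 n)) →ₗ[ℤ]
    ((P0 n ⊗[ℤ] P2 n) × (P1 n ⊗[ℤ] P1 n) × (P2 n ⊗[ℤ] P0 n)) :=
  (TensorProduct.map (L0 g) (L0 g)).prodMap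
    ((TensorProduct.map (L1 g) (L1 g)).prodMap (TensorProduct.map (L0 g) (L0 g)))

lemma D2_one : D2 (1 : P2 n) = ((1 : P0 n) ⊗ₜ[ℤ] (1 : P2 n), Delta11 n,
    (1 : P2 n) ⊗ₜ[ℤ] (1 : P0 n)) := by
  rw [D2, lifted_one, phi2, j_one, L1_one, TensorProduct.map_id]
  rfl

lemma phi2_equi (g h : SurfaceGroup n) : phi2 (g * h) = rho2 g (phi2 h) := by
  rw [phi2, phi2, rho2]
  refine Prod.ext ?_ (Prod.ext ?_ ?_)
  · show j (g * h) ⊗ₜ[ℤ] j (g * h)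
      = TensorProduct.map (L0 g) (L0 g) (j h ⊗ₜ[ℤ] j h)
    rw [TensorProduct.map_tmul, L0_apply, ← map_mul]
  · show TensorProduct.map (L1 (g * h)) (L1 (g * h)) (Delta11 n)
      = TensorProduct.map (L1 g) (L1 g) (TensorProduct.map (L1 h) (L1 h) (Delta11 n))
    rw [L1_mul, TensorProduct.map_comp]
    rfl
  · show j (g * h) ⊗ₜ[ℤ] j (g * h)
      = TensorProduct.map (L0 g) (L0 g) (j h ⊗ₜ[ℤ] j h)
    rw [TensorProduct.map_tmul, L0_apply, ← map_mul]

lemma hD2 (g : SurfaceGroup n) (c : P2 n) : D2 (j g * c) = rho2 g (D2 c) :=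
  lifted_mul _ g _ (phi2_equi g) c

section Ext
variable {M : Type} [AddCommGroup M] [Module ℤ M]

lemma P0_lhom_ext {F G : P0 n →ₗ[ℤ] M} (h : ∀ g, F (j g) = G (j g)) : F = G := by
  refine MonoidAlgebra.lhom_ext' fun g => LinearMap.ext_ring ?_
  show F (MonoidAlgebra.single g 1) = G (MonoidAlgebra.single g 1)
  exact h g

lemma single_smul_Y (i : Fin n) (c : A n) : Pi.single i c = c • Y i := by
  funext s
  have h0 : (c • Y i) s = c * (Y i s) := rfl
  rw [h0, Y]
  rcases eq_or_ne s i with rfl | hs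
  · rw [Pi.single_eq_same, Pi.single_eq_same, mul_one]
  · rw [Pi.single_eq_of_ne hs, Pi.single_eq_of_ne hs, mul_zero]

lemma P1_lhom_ext {F G : P1 n →ₗ[ℤ] M}
    (h : ∀ (g : SurfaceGroup n) (i : Fin n), F (j g • Y i) = G (j g • Y i)) :
    F = G := by
  apply LinearMap.pi_ext
  intro i x
  have h2 : F ∘ₗ LinearMap.single ℤ (fun _ : Fin n => A n) i
      = G ∘ₗ LinearMap.single ℤ (fun _ : Fin n => A n) i := by
    apply P0_lhom_ext
    intro g
    show F (Pi.single i (j g)) = G (Pi.single i (j g))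
    rw [single_smul_Y]
    exact h g i
  exact LinearMap.congr_fun h2 x

end Ext

lemma aug_j (g : SurfaceGroup n) : aug (j g : A n) = 1 := by
  rw [aug, j]
  rw [MonoidAlgebra.lift_of]
  rfl

lemma aug_cond (c : P0 n) : augaug (D0 c) = aug c := by
  have h : (augaug ∘ₗ D0 : P0 n →ₗ[ℤ] ℤ) = augz := by
    apply P0_lhom_ext
    intro g
    show augaug (D0 (j g)) = augz (j g)
    rw [D0, lifted_j]
    rw [augaug]
    show (TensorProduct.lid ℤ ℤ) (TensorProduct.map augz augz (j g ⊗ₜ[ℤ] j g)) = augz (j g)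
    rw [TensorProduct.map_tmul, TensorProduct.lid_tmul]
    show aug (j g : A n) • aug (j g : A n) = aug (j g : A n)
    rw [aug_j]
    simp
  exact LinearMap.congr_fun h c

lemma d1_Y (i : Fin n) : d1 (Y i) = j (a i) - 1 := by
  show (∑ s, Y i s * (j (a s) - 1)) = j (a i) - 1
  rw [Finset.sum_eq_single i]
  · rw [Y, Pi.single_eq_same, one_mul]
  · intro k _ hk
    rw [Y, Pi.single_eq_of_ne hk, zero_mul]
  · intro h; exact absurd (Finset.mem_univ i) h

lemma d1_smul_Y (c : A n) (i : Fin n) : d1 (c • Y i) = c * (j (a i) - 1) := by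
  rw [LinearMap.map_smul, d1_Y]
  rfl

lemma deg1_cond (f : P1 n) :
    TensorProduct.map LinearMap.id d1z ((D1 f).1)
      + TensorProduct.map d1z LinearMap.id ((D1 f).2) = D0 (d1 f) := by
  have h : ((TensorProduct.map LinearMap.id d1z) ∘ₗ ((LinearMap.fst ℤ _ _) ∘ₗ D1)
      + (TensorProduct.map d1z LinearMap.id) ∘ₗ ((LinearMap.snd ℤ _ _) ∘ₗ D1)
      : P1 n →ₗ[ℤ] P0 n ⊗[ℤ] P0 n) = D0 ∘ₗ d1z := by
    apply P1_lhom_ext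
    intro g i
    show TensorProduct.map LinearMap.id d1z ((D1 (j g • Y i)).1)
        + TensorProduct.map d1z LinearMap.id ((D1 (j g • Y i)).2)
        = D0 (d1 (j g • Y i))
    rw [hD1, D1_Y]
    have h1 : (rho1 g ((1 : P0 n) ⊗ₜ[ℤ] Y i, Y i ⊗ₜ[ℤ] j (a i))).1
        = j g ⊗ₜ[ℤ] (j g • Y i) := by
      show TensorProduct.map (L0 g) (L1 g) ((1 : P0 n) ⊗ₜ[ℤ] Y i) = _
      rw [TensorProduct.map_tmul]
      rw [L0_apply, mul_one]
      rfl
    have h2 : (rho1 g ((1 : P0 n) ⊗ₜ[ℤ] Y i, Y i ⊗ₜ[ℤ] j (a i))).2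
        = (j g • Y i) ⊗ₜ[ℤ] j (g * a i) := by
      show TensorProduct.map (L1 g) (L0 g) (Y i ⊗ₜ[ℤ] j (a i)) = _
      rw [TensorProduct.map_tmul, L0_apply, ← map_mul]
      rfl
    rw [h1, h2, TensorProduct.map_tmul, TensorProduct.map_tmul]
    have hd : d1z (j g • Y i) = j (g * a i) - j g := by
      show d1 (j g • Y i) = _
      rw [d1_smul_Y, mul_sub, mul_one, ← map_mul]
    rw [hd]
    have hid : (LinearMap.id : P0 n →ₗ[ℤ] P0 n) (j g) = j g := rfl
    have hid2 : (LinearMap.id : P0 n →ₗ[ℤ] P0 n) (j (g * a i)) = j (g * a i) := rfl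
    rw [hid, hid2]
    have hd' : d1 (j g • Y i) = j (g * a i) - j g := hd
    rw [hd']
    rw [map_sub, D0, lifted_j, lifted_j]
    rw [TensorProduct.tmul_sub, TensorProduct.sub_tmul]
    abel
  exact LinearMap.congr_fun h f

lemma Fa_eq (i : Fin n) : (Fa i : A n) = j (r i.val) + j (r i.val * a i) := by
  rw [Fa, mul_add, mul_one, ← map_mul]

lemma sq (i : Fin n) : (r i.val * a i * a i : SurfaceGroup n) = r (i.val + 1) := by
  rw [r_succ, pow_two, mul_assoc]

lemma Fa_d (i : Fin n) : (Fa i : A n) * (j (a i) - 1) = j (r (i.val + 1)) - j (r i.val) := by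
  rw [Fa_eq, add_mul, mul_sub, mul_sub, mul_one, mul_one, ← map_mul, ← map_mul, sq i]
  abel

lemma jr_d (i : Fin n) :
    (j (r i.val * a i) : A n) * (j (a i) - 1) = j (r (i.val + 1)) - j (r i.val * a i) := by
  rw [mul_sub, mul_one, ← map_mul, sq i]

lemma jrd (i : Fin n) :
    (j (r i.val) : A n) * (j (a i) - 1) = j (r i.val * a i) - j (r i.val) := by
  rw [mul_sub, mul_one, ← map_mul]

section Sums
variable {M : Type} [AddCommGroup M] [Module ℤ M]

lemma sum_Iio_reindex (i : Fin n) (g : ℕ → M) :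
    ∑ k ∈ Finset.Iio i, g k.val = ∑ k ∈ Finset.range i.val, g k := by
  have h0 : ∑ k ∈ Finset.Iio i, g k.val
      = ∑ x ∈ (Finset.Iio i).map Fin.valEmbedding, g x := (Finset.sum_map _ Fin.valEmbedding g).symm
  rw [h0, Fin.map_valEmbedding_Iio, ← Nat.Iio_eq_range]

lemma sum_Ioi_reindex (k : Fin n) (g : ℕ → M) :
    ∑ i ∈ Finset.Ioi k, g i.val = ∑ i ∈ Finset.Ico (k.val + 1) n, g i := by
  have h0 : ∑ i ∈ Finset.Ioi k, g i.val
      = ∑ x ∈ (Finset.Ioi k).map Fin.valEmbedding, g x := (Finset.sum_map _ Fin.valEmbedding g).symm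
  have h : Finset.Ioo k.val n = Finset.Ico (k.val + 1) n := by
    ext x
    simp only [Finset.mem_Ioo, Finset.mem_Ico]
    have := k.isLt
    omega
  rw [h0, Fin.map_valEmbedding_Ioi, h]

lemma teleIio (i : Fin n) :
    ∑ k ∈ Finset.Iio i, ((j (r (k.val + 1)) : A n) - j (r k.val)) = j (r i.val) - 1 := by
  rw [sum_Iio_reindex i (fun k => (j (r (k + 1)) : A n) - j (r k))]
  rw [Finset.sum_range_sub (fun k => (j (r k) : A n))]
  rw [r_zero, j_one]

lemma teleIoi (k : Fin n) :
    ∑ i ∈ Finset.Ioi k, ((j (r (i.val + 1)) : A n) - j (r i.val)) = 1 - j (r (k.val + 1)) := by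
  rw [sum_Ioi_reindex k (fun i => (j (r (i + 1)) : A n) - j (r i))]
  rw [Finset.sum_Ico_eq_sub _ (by have := k.isLt; omega)]
  rw [Finset.sum_range_sub (fun m => (j (r m) : A n)),
    Finset.sum_range_sub (fun m => (j (r m) : A n))]
  rw [r_zero, j_one, r_top, j_one]
  abel

lemma sum_swap (f : Fin n → Fin n → M) :
    ∑ i : Fin n, ∑ k ∈ Finset.Iio i, f i k = ∑ k : Fin n, ∑ i ∈ Finset.Ioi k, f i k := by
  have h1 : ∀ i : Fin n, ∑ k ∈ Finset.Iio i, f i k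
      = ∑ k : Fin n, if k < i then f i k else 0 := by
    intro i
    rw [← Finset.univ_inter (Finset.Iio i), ← Finset.sum_ite_mem]
    simp only [Finset.mem_Iio]
  have h2 : ∀ k : Fin n, ∑ i ∈ Finset.Ioi k, f i k
      = ∑ i : Fin n, if k < i then f i k else 0 := by
    intro k
    rw [← Finset.univ_inter (Finset.Ioi k), ← Finset.sum_ite_mem]
    simp only [Finset.mem_Ioi]
  simp only [h1, h2]
  exact Finset.sum_comm

end Sums

lemma d2_one_sum : d2 (1 : P2 n) = ∑ i : Fin n, Fa i • Y i := by
  have h1 : (∑ i : Fin n, Fa i • Y i : P1 n) = ∑ i : Fin n, Pi.single i (Fa i) :=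
    Finset.sum_congr rfl fun i _ => (single_smul_Y i (Fa i)).symm
  rw [h1, Finset.univ_sum_single]
  funext s
  show (1 : A n) * Fa s = Fa s
  rw [one_mul]

lemma D1_d2_one : D1 (d2 (1 : P2 n))
    = ∑ i : Fin n, (phi1 i (r i.val) + phi1 i (r i.val * a i)) := by
  rw [D1_apply]
  refine Finset.sum_congr rfl fun i _ => ?_
  have h : (d2 (1 : P2 n)) i = j (r i.val) + j (r i.val * a i) := by
    show (1 : A n) * Fa i = _
    rw [one_mul, Fa_eq]
  rw [h, map_add, lifted_j, lifted_j]

lemma hFaY (i : Fin n) :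
    (Fa i • Y i : P1 n) = j (r (n := n) i.val) • Y i + j (r (n := n) i.val * a i) • Y i := by
  rw [Fa_eq, add_smul]

lemma compA :
    TensorProduct.map LinearMap.id d2z ((1 : P0 n) ⊗ₜ[ℤ] (1 : P2 n))
      + TensorProduct.map d1z LinearMap.id (Delta11 n)
      = (D1 (d2 (1 : P2 n))).1 := by
  have ht1 : TensorProduct.map LinearMap.id d2z ((1 : P0 n) ⊗ₜ[ℤ] (1 : P2 n))
      = ∑ i : Fin n, (1 : P0 n) ⊗ₜ[ℤ] (Fa i • Y i) := by
    rw [TensorProduct.map_tmul]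
    simp only [LinearMap.id_coe, id_eq]
    have h : d2z (1 : P2 n) = ∑ i : Fin n, Fa i • Y i := d2_one_sum
    rw [h, TensorProduct.tmul_sum]
  have ht2 : TensorProduct.map d1z LinearMap.id (Delta11 n)
      = ∑ i : Fin n, (((j (r i.val) : A n) - 1) ⊗ₜ[ℤ] (Fa i • Y i)
        + ((j (r i.val * a i) : A n) - j (r i.val)) ⊗ₜ[ℤ] (j (r i.val * a i) • Y i)) := by
    rw [Delta11, map_sum]
    refine Finset.sum_congr rfl fun i _ => ?_
    rw [map_add, map_sum]
    have hin : ∀ k ∈ Finset.Iio i,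
        TensorProduct.map d1z LinearMap.id ((Fa k • Y k) ⊗ₜ[ℤ] (Fa i • Y i))
        = ((j (r (k.val + 1)) : A n) - j (r k.val)) ⊗ₜ[ℤ] (Fa i • Y i) := by
      intro k _
      rw [TensorProduct.map_tmul]
      have h : d1z (Fa k • Y k) = (j (r (k.val + 1)) : A n) - j (r k.val) := by
        show d1 (Fa k • Y k) = _
        rw [d1_smul_Y, Fa_d]
      rw [h]
      simp only [LinearMap.id_coe, id_eq]
    rw [Finset.sum_congr rfl hin, ← TensorProduct.sum_tmul, teleIio]
    rw [TensorProduct.map_tmul]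
    have h : d1z (j (r (n := n) i.val) • Y i) = (j (r i.val * a i) : A n) - j (r i.val) := by
      show d1 (j (r (n := n) i.val) • Y i) = _
      rw [d1_smul_Y, jrd]
    rw [h]
    simp only [LinearMap.id_coe, id_eq]
  rw [ht1, ht2, D1_d2_one, Prod.fst_sum, ← Finset.sum_add_distrib]
  refine Finset.sum_congr rfl fun i _ => ?_
  have hp : (phi1 i (r i.val) + phi1 i (r i.val * a i)).1
      = j (r i.val) ⊗ₜ[ℤ] (j (r i.val) • Y i)
        + j (r i.val * a i) ⊗ₜ[ℤ] (j (r i.val * a i) • Y i) := rfl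
  rw [hp, hFaY]
  simp only [TensorProduct.tmul_add, TensorProduct.sub_tmul]
  abel

lemma compB :
    TensorProduct.map d2z LinearMap.id ((1 : P2 n) ⊗ₜ[ℤ] (1 : P0 n))
      - TensorProduct.map LinearMap.id d1z (Delta11 n)
      = (D1 (d2 (1 : P2 n))).2 := by
  have ht1 : TensorProduct.map d2z LinearMap.id ((1 : P2 n) ⊗ₜ[ℤ] (1 : P0 n))
      = ∑ i : Fin n, (Fa i • Y i) ⊗ₜ[ℤ] (1 : P0 n) := by
    rw [TensorProduct.map_tmul]
    simp only [LinearMap.id_coe, id_eq]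
    have h : d2z (1 : P2 n) = ∑ i : Fin n, Fa i • Y i := d2_one_sum
    rw [h, TensorProduct.sum_tmul]
  have ht2 : TensorProduct.map LinearMap.id d1z (Delta11 n)
      = ∑ i : Fin n,
          ((∑ k ∈ Finset.Iio i, (Fa k • Y k) ⊗ₜ[ℤ] ((j (r (i.val + 1)) : A n) - j (r i.val)))
            + (j (r (n := n) i.val) • Y i) ⊗ₜ[ℤ] ((j (r (i.val + 1)) : A n) - j (r i.val * a i))) := by
    rw [Delta11, map_sum]
    refine Finset.sum_congr rfl fun i _ => ?_
    rw [map_add, map_sum]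
    have hd : d1z (Fa i • Y i) = (j (r (i.val + 1)) : A n) - j (r i.val) := by
      show d1 (Fa i • Y i) = _
      rw [d1_smul_Y, Fa_d]
    have hin : ∀ k ∈ Finset.Iio i,
        TensorProduct.map LinearMap.id d1z ((Fa k • Y k) ⊗ₜ[ℤ] (Fa i • Y i))
        = (Fa k • Y k) ⊗ₜ[ℤ] ((j (r (i.val + 1)) : A n) - j (r i.val)) := by
      intro k _
      rw [TensorProduct.map_tmul, hd]
      simp only [LinearMap.id_coe, id_eq]
    rw [Finset.sum_congr rfl hin]
    rw [TensorProduct.map_tmul]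
    have h : d1z (j (r i.val * a i) • Y i)
        = (j (r (i.val + 1)) : A n) - j (r i.val * a i) := by
      show d1 (j (r i.val * a i) • Y i) = _
      rw [d1_smul_Y, jr_d]
    rw [h]
    simp only [LinearMap.id_coe, id_eq]
  have hswap : ∑ i : Fin n,
        ∑ k ∈ Finset.Iio i, (Fa k • Y k) ⊗ₜ[ℤ] ((j (r (i.val + 1)) : A n) - j (r i.val))
      = ∑ k : Fin n, (Fa k • Y k) ⊗ₜ[ℤ] ((1 : A n) - j (r (k.val + 1))) := by
    rw [sum_swap (f := fun i k => (Fa k • Y k) ⊗ₜ[ℤ] ((j (r (i.val + 1)) : A n) - j (r i.val)))]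
    refine Finset.sum_congr rfl fun k _ => ?_
    rw [← TensorProduct.tmul_sum, teleIoi]
  rw [ht1, ht2, Finset.sum_add_distrib, hswap, D1_d2_one, Prod.snd_sum]
  rw [← Finset.sum_add_distrib, ← Finset.sum_sub_distrib]
  refine Finset.sum_congr rfl fun i _ => ?_
  have hp : (phi1 i (r i.val) + phi1 i (r i.val * a i)).2
      = (j (r (n := n) i.val) • Y i) ⊗ₜ[ℤ] j (r (n := n) i.val * a i)
        + (j (r (n := n) i.val * a i) • Y i) ⊗ₜ[ℤ] j (r (n := n) i.val * a i * a i) := rfl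
  rw [hp]
  have hj : (j (r i.val * a i * a i) : A n) = j (r (i.val + 1)) := congrArg j (sq i)
  rw [hj, hFaY]
  simp only [TensorProduct.add_tmul, TensorProduct.tmul_sub]
  abel

lemma comm_d2_L0 (g : SurfaceGroup n) : d2z ∘ₗ L0 g = L1 g ∘ₗ d2z := by
  apply LinearMap.ext; intro c; funext s
  show (j g * c) * Fa s = j g * (c * Fa s)
  rw [mul_assoc]

lemma comm_d1_L1 (g : SurfaceGroup n) : d1z ∘ₗ L1 g = L0 g ∘ₗ d1z := by
  apply LinearMap.ext; intro f
  show d1 (j g • f) = j g * d1 f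
  rw [LinearMap.map_smul]
  rfl

lemma mapcomm_A (g : SurfaceGroup n) (t : P0 n ⊗[ℤ] P0 n) :
    TensorProduct.map LinearMap.id d2z (TensorProduct.map (L0 g) (L0 g) t)
      = TensorProduct.map (L0 g) (L1 g) (TensorProduct.map LinearMap.id d2z t) := by
  have h : (TensorProduct.map LinearMap.id d2z) ∘ₗ (TensorProduct.map (L0 g) (L0 g))
      = (TensorProduct.map (L0 g) (L1 g)) ∘ₗ (TensorProduct.map LinearMap.id d2z) := by
    rw [← TensorProduct.map_comp, ← TensorProduct.map_comp, LinearMap.id_comp,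
      LinearMap.comp_id, comm_d2_L0]
  exact LinearMap.congr_fun h t

lemma mapcomm_B (g : SurfaceGroup n) (t : P1 n ⊗[ℤ] P1 n) :
    TensorProduct.map d1z LinearMap.id (TensorProduct.map (L1 g) (L1 g) t)
      = TensorProduct.map (L0 g) (L1 g) (TensorProduct.map d1z LinearMap.id t) := by
  have h : (TensorProduct.map d1z LinearMap.id) ∘ₗ (TensorProduct.map (L1 g) (L1 g))
      = (TensorProduct.map (L0 g) (L1 g)) ∘ₗ (TensorProduct.map d1z LinearMap.id) := by
    rw [← TensorProduct.map_comp, ← TensorProduct.map_comp, LinearMap.id_comp,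
      LinearMap.comp_id, comm_d1_L1]
  exact LinearMap.congr_fun h t

lemma mapcomm_C (g : SurfaceGroup n) (t : P2 n ⊗[ℤ] P0 n) :
    TensorProduct.map d2z LinearMap.id (TensorProduct.map (L0 g) (L0 g) t)
      = TensorProduct.map (L1 g) (L0 g) (TensorProduct.map d2z LinearMap.id t) := by
  have h : (TensorProduct.map d2z LinearMap.id) ∘ₗ (TensorProduct.map (L0 g) (L0 g))
      = (TensorProduct.map (L1 g) (L0 g)) ∘ₗ (TensorProduct.map d2z LinearMap.id) := by
    rw [← TensorProduct.map_comp, ← TensorProduct.map_comp, LinearMap.id_comp,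
      LinearMap.comp_id, comm_d2_L0]
  exact LinearMap.congr_fun h t

lemma mapcomm_D (g : SurfaceGroup n) (t : P1 n ⊗[ℤ] P1 n) :
    TensorProduct.map LinearMap.id d1z (TensorProduct.map (L1 g) (L1 g) t)
      = TensorProduct.map (L1 g) (L0 g) (TensorProduct.map LinearMap.id d1z t) := by
  have h : (TensorProduct.map LinearMap.id d1z) ∘ₗ (TensorProduct.map (L1 g) (L1 g))
      = (TensorProduct.map (L1 g) (L0 g)) ∘ₗ (TensorProduct.map LinearMap.id d1z) := by
    rw [← TensorProduct.map_comp, ← TensorProduct.map_comp, LinearMap.id_comp,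
      LinearMap.comp_id, comm_d1_L1]
  exact LinearMap.congr_fun h t

lemma d2_j (g : SurfaceGroup n) : d2 (j g : P2 n) = j g • d2 (1 : P2 n) := by
  funext s
  show j g * Fa s = j g * ((1 : A n) * Fa s)
  rw [one_mul]

lemma deg2_cond (c : P2 n) :
    (TensorProduct.map LinearMap.id d2z ((D2 c).1)
        + TensorProduct.map d1z LinearMap.id ((D2 c).2.1),
     TensorProduct.map d2z LinearMap.id ((D2 c).2.2)
        - TensorProduct.map LinearMap.id d1z ((D2 c).2.1)) = D1 (d2 c) := by
  have h : ((( (TensorProduct.map LinearMap.id d2z) ∘ₗ ((LinearMap.fst ℤ _ _) ∘ₗ D2)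
        + (TensorProduct.map d1z LinearMap.id) ∘ₗ ((LinearMap.fst ℤ _ _) ∘ₗ
            ((LinearMap.snd ℤ _ _) ∘ₗ D2))).prod
      ((TensorProduct.map d2z LinearMap.id) ∘ₗ ((LinearMap.snd ℤ _ _) ∘ₗ
            ((LinearMap.snd ℤ _ _) ∘ₗ D2))
        - (TensorProduct.map LinearMap.id d1z) ∘ₗ ((LinearMap.fst ℤ _ _) ∘ₗ
            ((LinearMap.snd ℤ _ _) ∘ₗ D2)))) : P2 n →ₗ[ℤ] _)
      = D1 ∘ₗ d2z := by
    apply P0_lhom_ext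
    intro g
    show (TensorProduct.map LinearMap.id d2z ((D2 (j g)).1)
        + TensorProduct.map d1z LinearMap.id ((D2 (j g)).2.1),
      TensorProduct.map d2z LinearMap.id ((D2 (j g)).2.2)
        - TensorProduct.map LinearMap.id d1z ((D2 (j g)).2.1)) = D1 (d2 (j g))
    have hg : D2 (j g : P2 n) = rho2 g (D2 (1 : P2 n)) := by
      have h0 : (j g : P2 n) = j g * 1 := (mul_one _).symm
      rw [h0, hD2]
    rw [hg, D2_one]
    have h1 : (rho2 g ((1 : P0 n) ⊗ₜ[ℤ] (1 : P2 n), Delta11 n,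
        (1 : P2 n) ⊗ₜ[ℤ] (1 : P0 n))).1
        = TensorProduct.map (L0 g) (L0 g) ((1 : P0 n) ⊗ₜ[ℤ] (1 : P2 n)) := rfl
    have h2 : (rho2 g ((1 : P0 n) ⊗ₜ[ℤ] (1 : P2 n), Delta11 n,
        (1 : P2 n) ⊗ₜ[ℤ] (1 : P0 n))).2.1
        = TensorProduct.map (L1 g) (L1 g) (Delta11 n) := rfl
    have h3 : (rho2 g ((1 : P0 n) ⊗ₜ[ℤ] (1 : P2 n), Delta11 n,
        (1 : P2 n) ⊗ₜ[ℤ] (1 : P0 n))).2.2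
        = TensorProduct.map (L0 g) (L0 g) ((1 : P2 n) ⊗ₜ[ℤ] (1 : P0 n)) := rfl
    rw [h1, h2, h3, mapcomm_A, mapcomm_B, mapcomm_C, mapcomm_D, ← map_add, ← map_sub,
      compA, compB, d2_j, hD1]
    rfl
  have h2 := LinearMap.congr_fun h c
  exact h2

/-- there is a diagonal approximation `Δ : P → P ⊗ P` (a chain map of
complexes of `ℤG`-modules, where `P ⊗ P` carries the diagonal `G`-action, compatible with
the augmentations) whose components take the stated values on the generators `x`, `yᵢ`
and `w`.  `ℤG`-linearity into the diagonal action is expressed as `ℤ`-linearity together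
with `G`-equivariance. -/
theorem statement4 (n : ℕ) (hn : 2 ≤ n) :
    ∃ (Δ0 : P0 n →ₗ[ℤ] P0 n ⊗[ℤ] P0 n)
      (Δ1 : P1 n →ₗ[ℤ] (P0 n ⊗[ℤ] P1 n) × (P1 n ⊗[ℤ] P0 n))
      (Δ2 : P2 n →ₗ[ℤ] (P0 n ⊗[ℤ] P2 n) × (P1 n ⊗[ℤ] P1 n) × (P2 n ⊗[ℤ] P0 n)),
      -- `ℤG`-linearity (equivariance for the diagonal action on the target)
      (∀ (g : SurfaceGroup n) (c : P0 n),
        Δ0 (j g * c) = TensorProduct.map (L0 g) (L0 g) (Δ0 c)) ∧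
      (∀ (g : SurfaceGroup n) (f : P1 n),
        Δ1 (j g • f) = (TensorProduct.map (L0 g) (L1 g) (Δ1 f).1,
                        TensorProduct.map (L1 g) (L0 g) (Δ1 f).2)) ∧
      (∀ (g : SurfaceGroup n) (c : P2 n),
        Δ2 (j g * c) = (TensorProduct.map (L0 g) (L0 g) (Δ2 c).1,
                        TensorProduct.map (L1 g) (L1 g) (Δ2 c).2.1,
                        TensorProduct.map (L0 g) (L0 g) (Δ2 c).2.2)) ∧
      -- compatibility with the augmentation: `(ε ⊗ ε) ∘ Δ₀ = ε`
      (∀ c : P0 n, augaug (Δ0 c) = aug c) ∧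
      -- chain map condition in degree 1: `∂₁ ∘ Δ₁ = Δ₀ ∘ d₁`
      (∀ f : P1 n,
        TensorProduct.map LinearMap.id d1z ((Δ1 f).1)
          + TensorProduct.map d1z LinearMap.id ((Δ1 f).2) = Δ0 (d1 f)) ∧
      -- chain map condition in degree 2: `∂₂ ∘ Δ₂ = Δ₁ ∘ d₂`
      (∀ c : P2 n,
        (TensorProduct.map LinearMap.id d2z ((Δ2 c).1)
            + TensorProduct.map d1z LinearMap.id ((Δ2 c).2.1),
         TensorProduct.map d2z LinearMap.id ((Δ2 c).2.2)
            - TensorProduct.map LinearMap.id d1z ((Δ2 c).2.1)) = Δ1 (d2 c)) ∧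
      -- the stated values on generators
      Δ0 (1 : P0 n) = (1 : P0 n) ⊗ₜ[ℤ] (1 : P0 n) ∧
      (∀ i : Fin n, Δ1 (Y i) = ((1 : P0 n) ⊗ₜ[ℤ] Y i, Y i ⊗ₜ[ℤ] j (a i))) ∧
      (Δ2 (1 : P2 n)).1 = (1 : P0 n) ⊗ₜ[ℤ] (1 : P2 n) ∧
      (Δ2 (1 : P2 n)).2.1 = Delta11 n := by
  refine ⟨D0, D1, D2, hD0, ?_, ?_, aug_cond, deg1_cond, deg2_cond, D0_one, D1_Y, ?_, ?_⟩
  · intro g f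
    rw [hD1]
    rfl
  · intro g c
    rw [hD2]
    rfl
  · rw [D2_one]
  · rw [D2_one]

end SurfaceNonOr
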